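/- Fix a nonnegative integer m. For all complex q with |q| < 1, the sum of q^{Σ_{s∈S} s} over all m-element subsets S of the positive integers equals q^{m(m+1)/2} / (q;q)_m. -/

import Mathlib

namespace TilingAux

abbrev Sub (m : ℕ) := {S : Finset ℕ+ // S.card = m}

variable {m : ℕ}

def a (g : ℕ) : ℕ+ := ⟨g + 1, Nat.succ_pos _⟩

lemma mem_map_lt (g : ℕ) (T : Finset ℕ+) {x : ℕ+} (hx : x ∈ T.map (addLeftEmbedding (a g))) :
    a g < x := by
  obtain ⟨t, _, rfl⟩ := Finset.mem_map.mp hx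
  show a g < a g + t
  rw [← PNat.coe_lt_coe, PNat.add_coe]
  exact Nat.lt_add_of_pos_right t.pos

def Ψ (p : ℕ × Sub m) : Sub (m + 1) :=
  ⟨insert (a p.1) ((p.2 : Finset ℕ+).map (addLeftEmbedding (a p.1))), by
    rw [Finset.card_insert_of_notMem, Finset.card_map, p.2.2]
    exact fun h => lt_irrefl _ (mem_map_lt _ _ h)⟩

lemma psi_min (p : ℕ × Sub m) (h : (Ψ p : Finset ℕ+).Nonempty) :
    (Ψ p : Finset ℕ+).min' h = a p.1 := by
  apply le_antisymm
  · exact Finset.min'_le _ _ (Finset.mem_insert_self _ _)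
  · have := Finset.min'_mem (Ψ p : Finset ℕ+) h
    rcases Finset.mem_insert.mp this with h' | h'
    · exact h'.ge
    · exact (mem_map_lt _ _ h').le

lemma psi_inj : Function.Injective (Ψ (m := m)) := by
  rintro ⟨g₁, T₁⟩ ⟨g₂, T₂⟩ h
  have hval : (Ψ (g₁, T₁) : Finset ℕ+) = (Ψ (g₂, T₂) : Finset ℕ+) := congrArg _ h
  have hne : (Ψ (g₁, T₁) : Finset ℕ+).Nonempty := ⟨a g₁, Finset.mem_insert_self _ _⟩
  have hne2 : (Ψ (g₂, T₂) : Finset ℕ+).Nonempty := hval ▸ hne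
  have hmin : a g₁ = a g₂ := by
    rw [← psi_min (g₁, T₁) hne, ← psi_min (g₂, T₂) hne2]
    congr 1
  have hg : g₁ = g₂ := by
    have := congrArg (fun x : ℕ+ => (x : ℕ)) hmin
    simpa [a] using this
  subst hg
  have hT : (T₁ : Finset ℕ+).map (addLeftEmbedding (a g₁)) =
      (T₂ : Finset ℕ+).map (addLeftEmbedding (a g₁)) := by
    have h1 : ∀ T : Finset ℕ+, a g₁ ∉ T.map (addLeftEmbedding (a g₁)) :=
      fun T hmem => lt_irrefl _ (mem_map_lt _ _ hmem)
    have := congrArg (fun s : Finset ℕ+ => s.erase (a g₁)) hval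
    simpa [Ψ, Finset.erase_insert_eq_erase, Finset.erase_eq_of_notMem (h1 _)] using this
  refine Prod.ext rfl (Subtype.ext ?_)
  exact Finset.map_injective _ hT

lemma psi_surj : Function.Surjective (Ψ (m := m)) := by
  rintro ⟨S, hS⟩
  have hne : S.Nonempty := Finset.card_pos.mp (by omega)
  set b := S.min' hne with hb
  have hbS : b ∈ S := S.min'_mem hne
  set g : ℕ := (b : ℕ) - 1 with hg
  have hab : a g = b := by
    apply Subtype.ext
    have := b.pos
    show g + 1 = (b : ℕ)
    omega
  have hinj : Function.Injective (fun x : ℕ+ => a g + x) := fun x y h => by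
    simpa using add_left_cancel h
  set T : Finset ℕ+ := (S.erase b).preimage (fun x => a g + x) hinj.injOn with hT
  have hrange : ∀ x ∈ S.erase b, ∃ t : ℕ+, a g + t = x := by
    intro x hx
    have hxS := Finset.mem_of_mem_erase hx
    have hxb : x ≠ b := Finset.ne_of_mem_erase hx
    have hlt : (b : ℕ) < (x : ℕ) := by
      have hle : b ≤ x := S.min'_le x hxS
      have : b < x := lt_of_le_of_ne hle (fun hc => hxb hc.symm)
      exact this
    refine ⟨⟨(x : ℕ) - (b : ℕ), by omega⟩, ?_⟩
    apply PNat.eq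
    have := b.pos
    show (g + 1) + ((x : ℕ) - (b : ℕ)) = (x : ℕ)
    omega
  have hmap : T.map (addLeftEmbedding (a g)) = S.erase b := by
    ext x
    simp only [Finset.mem_map, hT, Finset.mem_preimage, addLeftEmbedding]
    constructor
    · rintro ⟨t, ht, rfl⟩; exact ht
    · intro hx
      obtain ⟨t, htx⟩ := hrange x hx
      exact ⟨t, by rw [htx]; exact hx, htx⟩
  have hcardT : T.card = m := by
    have := Finset.card_map (addLeftEmbedding (a g)) (s := T)
    rw [hmap] at this
    rw [← this, Finset.card_erase_of_mem hbS, hS]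
    omega
  refine ⟨(g, ⟨T, hcardT⟩), Subtype.ext ?_⟩
  show insert (a g) (T.map (addLeftEmbedding (a g))) = S
  rw [hmap, hab, Finset.insert_erase hbS]

noncomputable def E : ℕ × Sub m ≃ Sub (m + 1) := Equiv.ofBijective _ ⟨psi_inj, psi_surj⟩

lemma psi_sum (p : ℕ × Sub m) :
    (∑ s ∈ (Ψ p : Finset ℕ+), (s : ℕ)) = (m + 1) * (p.1 + 1) + ∑ t ∈ (p.2 : Finset ℕ+), (t : ℕ) := by
  obtain ⟨g, T⟩ := p
  show (∑ s ∈ insert (a g) ((T : Finset ℕ+).map (addLeftEmbedding (a g))), (s:ℕ)) = _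
  rw [Finset.sum_insert (fun h => lt_irrefl _ (mem_map_lt _ _ h)), Finset.sum_map]
  simp only [addLeftEmbedding, Function.Embedding.coeFn_mk]
  have hcoe : ∀ x : ℕ+, ((a g + x : ℕ+) : ℕ) = (g + 1) + (x : ℕ) := fun x => rfl
  rw [Finset.sum_congr rfl (fun x _ => hcoe x)]
  show (g + 1) + _ = _
  rw [Finset.sum_add_distrib, Finset.sum_const, T.2]
  simp only [PNat.mk_coe, smul_eq_mul]
  ring

end TilingAux

namespace TilingAux

lemma key (q : ℂ) (hq : ‖q‖ < 1) : ∀ m : ℕ,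
    (Summable fun S : Sub m => ‖q ^ (∑ s ∈ (S : Finset ℕ+), (s : ℕ))‖) ∧
    (∑' S : Sub m, q ^ (∑ s ∈ (S : Finset ℕ+), (s : ℕ))) =
      q ^ (m * (m + 1) / 2) / ∏ i ∈ Finset.range m, (1 - q * q ^ i) := by
  intro m
  induction m with
  | zero =>
    haveI : Unique (Sub 0) := ⟨⟨⟨∅, rfl⟩⟩, fun S => Subtype.ext (Finset.card_eq_zero.mp S.2)⟩
    constructor
    · exact .of_finite
    · rw [tsum_eq_single (⟨∅, rfl⟩ : Sub 0)
        (fun b hb => absurd (Subtype.ext (Finset.card_eq_zero.mp b.2)) hb)]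
      simp
  | succ m ih =>
    set x : ℂ := q ^ (m + 1) with hxdef
    have hx : ‖x‖ < 1 := by
      rw [hxdef, norm_pow]
      exact pow_lt_one₀ (norm_nonneg q) hq (Nat.succ_ne_zero m)
    set f : ℕ → ℂ := fun g => x ^ (g + 1) with hfdef
    have hf : Summable fun g => ‖f g‖ := by
      have : Summable fun g : ℕ => ‖x‖ * ‖x‖ ^ g :=
        (summable_geometric_of_lt_one (norm_nonneg x) hx).mul_left _
      refine this.congr fun g => ?_
      simp [hfdef, norm_pow, pow_succ']
    have hpt : ∀ p : ℕ × Sub m,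
        q ^ (∑ s ∈ ((E p : Sub (m+1)) : Finset ℕ+), (s : ℕ)) =
          f p.1 * q ^ (∑ t ∈ (p.2 : Finset ℕ+), (t : ℕ)) := by
      intro p
      have : (E p : Sub (m+1)) = Ψ p := rfl
      rw [this, psi_sum, pow_add, pow_mul]
    have hsum1 : Summable fun S : Sub (m+1) => ‖q ^ (∑ s ∈ (S : Finset ℕ+), (s : ℕ))‖ := by
      rw [← (E (m := m)).summable_iff]
      refine (hf.mul_norm ih.1).congr fun p => ?_
      simp only [Function.comp, hpt p]
    refine ⟨hsum1, ?_⟩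
    have h1 : (∑' S : Sub (m+1), q ^ (∑ s ∈ (S : Finset ℕ+), (s : ℕ))) =
        (∑' g : ℕ, f g) * (∑' T : Sub m, q ^ (∑ t ∈ (T : Finset ℕ+), (t : ℕ))) := by
      rw [← (E (m := m)).tsum_eq]
      rw [tsum_mul_tsum_of_summable_norm hf ih.1]
      exact tsum_congr hpt
    have h2 : (∑' g : ℕ, f g) = x * (1 - x)⁻¹ := by
      have : (∑' g : ℕ, f g) = ∑' g : ℕ, x * x ^ g := tsum_congr fun g => by
        rw [hfdef]; ring
      rw [this, tsum_mul_left, tsum_geometric_of_norm_lt_one hx]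
    have hxne : (1 - x) ≠ 0 := by
      intro h
      have : x = 1 := by linear_combination -h
      rw [this] at hx; simp at hx
    have hDne : (∏ i ∈ Finset.range m, (1 - q * q ^ i)) ≠ 0 := by
      refine Finset.prod_ne_zero_iff.mpr fun i _ => ?_
      intro h
      have hxi : ‖q * q ^ i‖ < 1 := by
        have hqq : q * q ^ i = q ^ (i + 1) := (pow_succ' q i).symm
        rw [hqq, norm_pow]
        exact pow_lt_one₀ (norm_nonneg q) hq (Nat.succ_ne_zero i)
      have : q * q ^ i = 1 := by linear_combination -h
      rw [this] at hxi; simp at hxi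
    rw [h1, h2, ih.2, Finset.prod_range_succ]
    have hx' : 1 - q * q ^ m = 1 - x := by rw [hxdef, pow_succ']
    rw [hx']
    have hk : ∃ k, m * (m + 1) = 2 * k := (Nat.even_mul_succ_self m).two_dvd
    obtain ⟨k, hk⟩ := hk
    have hk2 : (m + 1) * (m + 1 + 1) = m * (m + 1) + 2 * (m + 1) := by ring
    rw [show (m+1) * (m+1+1) / 2 = (m+1) + m * (m+1) / 2 from by omega, pow_add, ← hxdef]
    field_simp

end TilingAux



/-- For fixed `m`, the sum of `q^(Σ_{s∈S} s)` over all `m`-element subsets `S`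
of the positive integers equals `q^{m(m+1)/2} / (q;q)_m`, for `|q| < 1`. -/
theorem tiling_m_black_squares (m : ℕ) (q : ℂ) (hq : ‖q‖ < 1) :
    (∑' S : {S : Finset ℕ+ // S.card = m}, q ^ (∑ s ∈ (S : Finset ℕ+), (s : ℕ))) =
      q ^ (m * (m + 1) / 2) / ∏ i ∈ Finset.range m, (1 - q * q ^ i) := by
  exact (TilingAux.key q hq m).2
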